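/- Let R be a noetherian commutative ring, A an R-algebra, M a right A-module, and regard M^* = Hom_R(M,R) as a left A-module via (a·f)(m) = f(ma). For f ∈ M^* the following are equivalent: (i) f(MI) = 0 for some two-sided ideal I of A with A/I finitely generated as an R-module; (ii) the R-submodule A·f ⊆ M^* is finitely generated as an R-module; (iii) f(L) = 0 for some right A-submodule L ⊆ M with M/L finitely generated as an R-module. -/

import Mathlib

section helpers
variable {R : Type*} [CommRing R] [IsNoetherianRing R]

/-- Over a noetherian ring, the quotient by the kernel of a map into a finite module is finite. -/
lemma aux_finite_quot_ker {M P : Type*} [AddCommGroup M] [Module R M]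
    [AddCommGroup P] [Module R P] [Module.Finite R P] (θ : M →ₗ[R] P) :
    Module.Finite R (M ⧸ LinearMap.ker θ) := by
  haveI : IsNoetherian R P := isNoetherian_of_isNoetherianRing_of_finite R P
  haveI : Module.Finite R (LinearMap.range θ) :=
    Module.Finite.iff_fg.mpr (IsNoetherian.noetherian _)
  exact Module.Finite.equiv θ.quotKerEquivRange.symm

end helpers

theorem rational_functional_characterizations
    {R A M : Type*} [CommRing R] [Nontrivial R] [IsNoetherianRing R]
    [Ring A] [Algebra R A]
    -- `M` is a right `A`-module (a left `Aᵐᵒᵖ`-module) which is also an `R`-module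
    [AddCommGroup M] [Module R M] [Module Aᵐᵒᵖ M] [IsScalarTower R Aᵐᵒᵖ M]
    (f : Module.Dual R M) :
    -- (i) `f(MI) = 0` for some `R`-cofinite two-sided ideal `I` of `A`
    ((∃ I : Ideal A, (∀ x ∈ I, ∀ a : A, x * a ∈ I) ∧ Module.Finite R (A ⧸ I) ∧
        ∀ m : M, ∀ x ∈ I, f (MulOpposite.op x • m) = 0) ↔
      -- (ii) `A·f ⊆ M^*`, where `(a·f)(m) = f(m·a)`, is finitely generated over `R`
      (Submodule.span R (Set.range fun a : A =>
        f ∘ₗ DistribMulAction.toLinearMap R M (MulOpposite.op a))).FG) ∧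
    ((Submodule.span R (Set.range fun a : A =>
        f ∘ₗ DistribMulAction.toLinearMap R M (MulOpposite.op a))).FG ↔
      -- (iii) `f(L) = 0` for some `R`-cofinite right `A`-submodule `L ⊆ M`
      (∃ L : Submodule Aᵐᵒᵖ M, Module.Finite R (M ⧸ L) ∧ ∀ m ∈ L, f m = 0)) := by
  -- the R-linear map a ↦ a·f
  set φ : A →ₗ[R] Module.Dual R M :=
    { toFun := fun a => f ∘ₗ DistribMulAction.toLinearMap R M (MulOpposite.op a)
      map_add' := by
        intro a b; ext m
        show f (MulOpposite.op (a + b) • m) = f (MulOpposite.op a • m) + f (MulOpposite.op b • m)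
        simp [MulOpposite.op_add, add_smul]
      map_smul' := by
        intro r a; ext m
        show f (MulOpposite.op (r • a) • m) = r * f (MulOpposite.op a • m)
        simp [MulOpposite.op_smul, smul_assoc] } with hφ
  have hφ_apply : ∀ (a : A) (m : M), φ a m = f (MulOpposite.op a • m) := fun a m => rfl
  have hspan : Submodule.span R (Set.range fun a : A =>
      f ∘ₗ DistribMulAction.toLinearMap R M (MulOpposite.op a)) = LinearMap.range φ := by
    apply le_antisymm
    · rw [Submodule.span_le]; rintro g ⟨a, rfl⟩; exact ⟨a, rfl⟩
    · rintro g ⟨a, rfl⟩; exact Submodule.subset_span ⟨a, rfl⟩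
  -- (i) → (ii)
  have h12 : (∃ I : Ideal A, (∀ x ∈ I, ∀ a : A, x * a ∈ I) ∧ Module.Finite R (A ⧸ I) ∧
      ∀ m : M, ∀ x ∈ I, f (MulOpposite.op x • m) = 0) →
      (Submodule.span R (Set.range fun a : A =>
        f ∘ₗ DistribMulAction.toLinearMap R M (MulOpposite.op a))).FG := by
    rintro ⟨I, -, hfin, hvan⟩
    rw [hspan]
    have hle : I.restrictScalars R ≤ LinearMap.ker φ := by
      intro x hx
      rw [LinearMap.mem_ker]
      ext m
      exact hvan m x hx
    set ψ : (A ⧸ I.restrictScalars R) →ₗ[R] Module.Dual R M :=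
      (I.restrictScalars R).liftQ φ hle with hψ
    have hrange : LinearMap.range ψ = LinearMap.range φ := Submodule.range_liftQ _ _ _
    haveI : Module.Finite R (A ⧸ I.restrictScalars R) :=
      Module.Finite.equiv (Submodule.Quotient.restrictScalarsEquiv R I).symm
    haveI : Module.Finite R (LinearMap.range ψ) := Module.Finite.range ψ
    rw [← hrange]
    exact Module.Finite.iff_fg.mp inferInstance
  -- (ii) → (iii)
  have h23 : (Submodule.span R (Set.range fun a : A =>
      f ∘ₗ DistribMulAction.toLinearMap R M (MulOpposite.op a))).FG →
      (∃ L : Submodule Aᵐᵒᵖ M, Module.Finite R (M ⧸ L) ∧ ∀ m ∈ L, f m = 0) := by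
    intro hfg
    rw [hspan] at hfg
    obtain ⟨s, hs⟩ := hfg
    -- L = common kernel of all a·f
    set L : Submodule Aᵐᵒᵖ M :=
      { carrier := {m | ∀ a : A, f (MulOpposite.op a • m) = 0}
        add_mem' := by intro m m' hm hm' a; simp [smul_add, hm a, hm' a]
        zero_mem' := by intro a; simp
        smul_mem' := by
          intro b m hm a
          have h1 : MulOpposite.op a • b • m = MulOpposite.op (b.unop * a) • m := by
            rw [← mul_smul, MulOpposite.op_mul, MulOpposite.op_unop]
          simpa [h1] using hm (b.unop * a) } with hL
    refine ⟨L, ?_, fun m hm => by simpa using hm 1⟩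
    -- θ : M → (s → R), m ↦ (g ↦ g m)
    set θ : M →ₗ[R] (s → R) :=
      { toFun := fun m => fun g => (g : Module.Dual R M) m
        map_add' := by intro m m'; ext g; simp
        map_smul' := by intro r m; ext g; simp } with hθ
    have hker : LinearMap.ker θ = L.restrictScalars R := by
      ext m
      constructor
      · intro hm a
        have hmem : (f ∘ₗ DistribMulAction.toLinearMap R M (MulOpposite.op a)) ∈
            Submodule.span R (s : Set (Module.Dual R M)) := by
          rw [hs]; exact ⟨a, rfl⟩
        have hall : ∀ g ∈ (s : Set (Module.Dual R M)), g m = 0 := by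
          intro g hg
          have := congrFun (LinearMap.mem_ker.mp hm) ⟨g, hg⟩
          exact this
        have : (f ∘ₗ DistribMulAction.toLinearMap R M (MulOpposite.op a)) m = 0 := by
          refine Submodule.span_induction hall ?_ ?_ ?_ hmem
          · simp
          · intro g g' _ _ hg hg'; simp [LinearMap.add_apply, hg, hg']
          · intro r g _ hg; simp [LinearMap.smul_apply, hg]
        exact this
      · intro hm
        rw [LinearMap.mem_ker]
        ext g
        have hgmem : (g : Module.Dual R M) ∈ Submodule.span R (s : Set (Module.Dual R M)) :=
          Submodule.subset_span g.2
        rw [hs] at hgmem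
        obtain ⟨a, ha⟩ := hgmem
        have : (g : Module.Dual R M) m = 0 := by rw [← ha]; exact hm a
        exact this
    haveI : Module.Finite R (M ⧸ L.restrictScalars R) := by
      rw [← hker]; exact aux_finite_quot_ker θ
    exact Module.Finite.equiv (Submodule.Quotient.restrictScalarsEquiv R L)
  -- (iii) → (i)
  have h31 : (∃ L : Submodule Aᵐᵒᵖ M, Module.Finite R (M ⧸ L) ∧ ∀ m ∈ L, f m = 0) →
      (∃ I : Ideal A, (∀ x ∈ I, ∀ a : A, x * a ∈ I) ∧ Module.Finite R (A ⧸ I) ∧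
        ∀ m : M, ∀ x ∈ I, f (MulOpposite.op x • m) = 0) := by
    rintro ⟨L, hfin, hvan⟩
    set I : Ideal A :=
      { carrier := {x | ∀ m : M, MulOpposite.op x • m ∈ L}
        add_mem' := by intro x y hx hy m; simpa [add_smul] using L.add_mem (hx m) (hy m)
        zero_mem' := by intro m; simp
        smul_mem' := by
          intro a x hx m
          have h1 : MulOpposite.op (a • x) • m = MulOpposite.op x • (MulOpposite.op a • m) := by
            rw [smul_eq_mul, MulOpposite.op_mul, mul_smul]
          rw [h1]
          exact hx _ } with hI
    have hIright : ∀ x ∈ I, ∀ a : A, x * a ∈ I := by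
      intro x hx a m
      have : MulOpposite.op (x * a) • m = MulOpposite.op a • (MulOpposite.op x • m) := by
        rw [MulOpposite.op_mul, mul_smul]
      rw [this]
      exact L.smul_mem _ (hx m)
    refine ⟨I, hIright, ?_, fun m x hx => hvan _ (hx m)⟩
    -- A ⧸ I injects into (gens → M⧸L)
    obtain ⟨t, ht⟩ := hfin.fg_top
    set ρ : A →ₗ[R] (t → M ⧸ L) :=
      { toFun := fun a => fun y => MulOpposite.op a • (y : M ⧸ L)
        map_add' := by intro a b; ext y; simp [MulOpposite.op_add, add_smul]
        map_smul' := by intro r a; ext y; simp [MulOpposite.op_smul, smul_assoc] } with hρ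
    have hker : LinearMap.ker ρ = I.restrictScalars R := by
      ext a
      constructor
      · intro ha m
        -- the action map kills all generators, hence all of M⧸L
        have hgen : ∀ y ∈ (t : Set (M ⧸ L)), MulOpposite.op a • y = 0 := by
          intro y hy
          exact congrFun (LinearMap.mem_ker.mp ha) ⟨y, hy⟩
        have hall : ∀ y : M ⧸ L, MulOpposite.op a • y = 0 := by
          intro y
          have hy : y ∈ Submodule.span R (t : Set (M ⧸ L)) := by rw [ht]; trivial
          refine Submodule.span_induction hgen ?_ ?_ ?_ hy
          · simp
          · intro y z _ _ hy hz; simp [smul_add, hy, hz]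
          · intro r y _ hy
            rw [smul_comm, hy, smul_zero]
        have := hall (Submodule.Quotient.mk m)
        rwa [← Submodule.Quotient.mk_smul, Submodule.Quotient.mk_eq_zero] at this
      · intro ha
        rw [LinearMap.mem_ker]
        ext y
        obtain ⟨m, hm⟩ := Submodule.Quotient.mk_surjective L (y : M ⧸ L)
        have : MulOpposite.op a • (y : M ⧸ L) = 0 := by
          rw [← hm, ← Submodule.Quotient.mk_smul, Submodule.Quotient.mk_eq_zero]
          exact ha m
        exact this
    haveI : Module.Finite R (A ⧸ I.restrictScalars R) := by
      rw [← hker]; exact aux_finite_quot_ker ρ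
    exact Module.Finite.equiv (Submodule.Quotient.restrictScalarsEquiv R I)
  exact ⟨⟨h12, fun h => h31 (h23 h)⟩, ⟨h23, fun h => h12 (h31 h)⟩⟩
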